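/- arXiv:1704.07408 — 4 statements merged into one kernel-verified Lean document; each statement's English description precedes it below -/
import Mathlib

section
/- Let H be a subgroup of π₁(X, x₀). Then X is an H-SLT space if and only if for every path α in X from x to y, the map f^α_H : (p_H⁻¹(y))^wh → (p_H⁻¹(x))^wh defined by f^α_H([δ]_H) = [δ⋆α⁻¹]_H is continuous. -/
open Set TopologicalSpace unitInterval

universe u

namespace SLTF

attribute [local instance] Path.Homotopic.setoid

variable {X : Type u} [TopologicalSpace X]

/-- The homotopy class of a loop as an element of the fundamental group. -/
noncomputable def fl {x : X} (γ : Path x x) : FundamentalGroup X x :=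
  @FundamentalGroup.fromPath X _ x ⟦γ⟧

/-- Multiplication of fundamental-group elements in path-concatenation order:
`pmul a b` is the class of "`a` followed by `b`". -/
noncomputable def pmul {x : X} (a b : FundamentalGroup X x) : FundamentalGroup X x :=
  @FundamentalGroup.fromPath X _ x
    (Path.Homotopic.Quotient.trans (@FundamentalGroup.toPath X _ x a)
      (@FundamentalGroup.toPath X _ x b))

/-- A path in `X` starting at the base point `x`, recorded together with its end point. -/
structure PPath (X : Type u) [TopologicalSpace X] (x : X) where
  target : X
  path : Path x target

/-- Two paths starting at `x` are identified when they have the same end point and the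
class of `α ⬝ β⁻¹` satisfies the predicate `P` (e.g. membership in a subgroup `H`). -/
def HRel (x : X) (P : Path x x → Prop) (α β : PPath X x) : Prop :=
  ∃ h : α.target = β.target, P (α.path.trans ((β.path.cast rfl h).symm))

/-- The set `X̃` of `P`-equivalence classes of paths starting at `x`. -/
def Xtilde (x : X) (P : Path x x → Prop) : Type u := Quot (HRel x P)

/-- The class of a path in `X̃`. -/
def mkX (x : X) (P : Path x x → Prop) (α : PPath X x) : Xtilde x P := Quot.mk _ α

/-- The basic whisker-open set `([α], U)`: all classes of prolongations of `α` by a path in `U`. -/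
def whBasic (x : X) (P : Path x x → Prop) (α : PPath X x) (U : Set X) : Set (Xtilde x P) :=
  { q | ∃ (y : X) (β : Path α.target y), range ⇑β ⊆ U ∧ q = mkX x P ⟨y, α.path.trans β⟩ }

/-- The whisker topology on `X̃`, generated by the sets `([α], U)` for `U` an open
neighbourhood of the end point of `α`. -/
instance whTop (x : X) (P : Path x x → Prop) : TopologicalSpace (Xtilde x P) :=
  generateFrom
    { S | ∃ (α : PPath X x) (U : Set X), IsOpen U ∧ α.target ∈ U ∧ S = whBasic x P α U }

/-- The endpoint projection `p : X̃ → X`. -/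
def endpt (x : X) (P : Path x x → Prop) : Xtilde x P → X :=
  Quot.lift (fun α => α.target) (fun _ _ h => h.elim fun e _ => e)

/-- The space of paths in `X` starting at `x`, with the compact-open topology. -/
def PSp (X : Type u) [TopologicalSpace X] (x : X) : Type u := { f : C(I, X) // f 0 = x }

instance (x : X) : TopologicalSpace (PSp X x) := instTopologicalSpaceSubtype

/-- The natural surjection from the path space onto `X̃`. -/
def toXt (x : X) (P : Path x x → Prop) : PSp X x → Xtilde x P :=
  fun f => mkX x P ⟨f.1 1, ⟨f.1, f.2, rfl⟩⟩

/-- The quotient of the compact-open topology on `X̃`. -/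
def topTop (x : X) (P : Path x x → Prop) : TopologicalSpace (Xtilde x P) :=
  coinduced (toXt x P) inferInstance

/-- Membership in a subgroup `H`, as a predicate on loops. -/
noncomputable def loopMem (x : X) (H : Subgroup (FundamentalGroup X x)) : Path x x → Prop :=
  fun γ => fl γ ∈ H

/-- `X̃_H`, the classes of paths starting at `x₀` modulo `H`. -/
abbrev XtildeH (x₀ : X) (H : Subgroup (FundamentalGroup X x₀)) : Type u :=
  Xtilde x₀ (loopMem x₀ H)

/-- The fiber of the endpoint projection over `y`, with the subspace (whisker) topology. -/
abbrev Fib (x : X) (P : Path x x → Prop) (y : X) : Type u :=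
  { q : Xtilde x P // endpt x P q = y }

/-- The class in the fiber over `y` of a path from `x` to `y`. -/
def mkFib (x : X) (P : Path x x → Prop) {y : X} (δ : Path x y) : Fib x P y :=
  ⟨mkX x P ⟨y, δ⟩, rfl⟩

/-- The whisker topology on the fundamental group `π₁(X, x)`: basic neighbourhoods of `a`
are the sets `{a ⋆ [γ] : γ a loop in U at x}` for `U` an open neighbourhood of `x`. -/
noncomputable def whPi1 (x : X) : TopologicalSpace (FundamentalGroup X x) :=
  generateFrom
    { S | ∃ (a : FundamentalGroup X x) (U : Set X), IsOpen U ∧ x ∈ U ∧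
        S = { b | ∃ γ : Path x x, range ⇑γ ⊆ U ∧ b = pmul a (fl γ) } }

/-- The quotient topology on `π₁(X, x)` induced from the loop space with the
compact-open topology. -/
noncomputable def qtopPi1 (x : X) : TopologicalSpace (FundamentalGroup X x) :=
  coinduced (fun γ : Path x x => fl γ) inferInstance

/-- `X` is `H`-SLT at `x₀`. -/
noncomputable def IsHSLTAt (x₀ : X) (H : Subgroup (FundamentalGroup X x₀)) : Prop :=
  ∀ (y : X) (α : Path x₀ y) (U : Set X), IsOpen U → x₀ ∈ U →
    ∃ V : Set X, IsOpen V ∧ y ∈ V ∧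
      ∀ β : Path y y, range ⇑β ⊆ V →
        ∃ γ : Path x₀ x₀, range ⇑γ ⊆ U ∧
          fl ((α.trans (β.trans α.symm)).trans γ.symm) ∈ H

/-- `X` is SLT at `x`. -/
def IsSLTAt (X : Type u) [TopologicalSpace X] (x : X) : Prop :=
  ∀ (y : X) (α : Path x y) (U : Set X), IsOpen U → x ∈ U →
    ∃ V : Set X, IsOpen V ∧ y ∈ V ∧
      ∀ β : Path y y, range ⇑β ⊆ V →
        ∃ γ : Path x x, range ⇑γ ⊆ U ∧ (α.trans (β.trans α.symm)).Homotopic γ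

/-- `X` is an SLT space. -/
def IsSLT (X : Type u) [TopologicalSpace X] : Prop := ∀ x : X, IsSLTAt X x

/-- `α` (a path from `x` to `y`) is an `H`-SLT path: for every path `lam` from `x₀` to `x`
and open `U ∋ x` there is an open `V ∋ y` such that every loop `β` in `V` at `y` transfers
to a loop `γ` in `U` at `x` with `[α ⋆ β ⋆ α⁻¹ ⋆ γ⁻¹] ∈ [lam⁻¹ H lam]`, i.e.
`[lam ⋆ (α ⋆ β ⋆ α⁻¹ ⋆ γ⁻¹) ⋆ lam⁻¹] ∈ H`. -/
noncomputable def IsHSLTPath (x₀ : X) (H : Subgroup (FundamentalGroup X x₀)) {x y : X}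
    (α : Path x y) : Prop :=
  ∀ (lam : Path x₀ x) (U : Set X), IsOpen U → x ∈ U →
    ∃ V : Set X, IsOpen V ∧ y ∈ V ∧
      ∀ β : Path y y, range ⇑β ⊆ V →
        ∃ γ : Path x x, range ⇑γ ⊆ U ∧
          fl (lam.trans ((((α.trans (β.trans α.symm)).trans γ.symm)).trans lam.symm)) ∈ H

/-- `X` is an `H`-SLT space: for every `x` and every path `lam` from `x₀` to `x`, `X` is
`[lam⁻¹ H lam]`-SLT at `x`. -/
noncomputable def IsHSLTSpace (x₀ : X) (H : Subgroup (FundamentalGroup X x₀)) : Prop :=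
  ∀ (x y : X) (α : Path x y), IsHSLTPath x₀ H α

/-- Membership in the conjugate subgroup `[lam⁻¹ H lam]` of `π₁(X, x)`,
as a predicate on loops at `x`. -/
noncomputable def conjMem (x₀ : X) (H : Subgroup (FundamentalGroup X x₀)) {x : X}
    (lam : Path x₀ x) : Path x x → Prop :=
  fun δ => fl (lam.trans (δ.trans lam.symm)) ∈ H

/-- `X` is homotopically Hausdorff relative to `H`. -/
noncomputable def HomHausdorffRel (x₀ : X) (H : Subgroup (FundamentalGroup X x₀)) : Prop :=
  ∀ (y : X) (α : Path x₀ y) (g : FundamentalGroup X x₀), g ∉ H →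
    ∃ U : Set X, IsOpen U ∧ y ∈ U ∧
      ∀ γ : Path y y, range ⇑γ ⊆ U →
        ¬ ∃ h ∈ H, fl (α.trans (γ.trans α.symm)) = pmul h g

/-- `X` is homotopically path Hausdorff relative to `H`. -/
noncomputable def HomPathHausdorffRel (x₀ : X) (H : Subgroup (FundamentalGroup X x₀)) : Prop :=
  ∀ (y : X) (α β : Path x₀ y), fl (α.trans β.symm) ∉ H →
    ∃ (n : ℕ) (t : Fin (n + 1) → I) (U : Fin n → Set X),
      t 0 = 0 ∧ t (Fin.last n) = 1 ∧ StrictMono t ∧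
      (∀ i : Fin n, IsOpen (U i)) ∧
      (∀ i : Fin n, ⇑α '' Set.Icc (t i.castSucc) (t i.succ) ⊆ U i) ∧
      ∀ γ : Path x₀ y,
        (∀ i : Fin n, ⇑γ '' Set.Icc (t i.castSucc) (t i.succ) ⊆ U i) →
        (∀ i : Fin (n + 1), γ (t i) = α (t i)) →
        fl (γ.trans β.symm) ∉ H

/-- The endpoint projection `p : X̃ → X` (with the whisker topology on `X̃`) has the
unique path lifting property. -/
def UPLP (x : X) (P : Path x x → Prop) : Prop :=
  ∀ g₁ g₂ : C(I, Xtilde x P), g₁ 0 = g₂ 0 →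
    (∀ t, endpt x P (g₁ t) = endpt x P (g₂ t)) → g₁ = g₂

/-- A semicovering map: a local homeomorphism with (continuous) unique lifting of paths
and of homotopies. -/
structure IsSemicovering {Y : Type u} [TopologicalSpace Y] (p : Y → X) : Prop where
  localHomeo : IsLocalHomeomorph p
  pathLift : ∀ (y : Y) (γ : C(I, X)), γ 0 = p y →
    ∃! γh : C(I, Y), γh 0 = y ∧ ∀ t, p (γh t) = γ t
  contPathLift : ∀ y : Y, ∃ L : { γ : C(I, X) // γ 0 = p y } → C(I, Y),
    Continuous L ∧ ∀ γ, (L γ) 0 = y ∧ ∀ t, p ((L γ) t) = (γ : C(I, X)) t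
  homotopyLift : ∀ (y : Y) (Φ : C(I × I, X)), Φ (0, 0) = p y →
    ∃! Φh : C(I × I, Y), Φh (0, 0) = y ∧ ∀ z, p (Φh z) = Φ z
  contHomotopyLift : ∀ y : Y, ∃ L : { Φ : C(I × I, X) // Φ (0, 0) = p y } → C(I × I, Y),
    Continuous L ∧ ∀ Φ, (L Φ) (0, 0) = y ∧ ∀ z, p ((L Φ) z) = (Φ : C(I × I, X)) z

/-- An `lpc₀`-covering map with `p₊π₁(Y, ·) = H`: a map which is equivalent, as a map
over `X`, to the endpoint projection `p_H : X̃_H → X` having the unique path lifting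
property (with `Y` path connected and locally path connected). -/
structure IsLpc0Covering {Y : Type u} [TopologicalSpace Y] (p : Y → X) (x₀ : X)
    (H : Subgroup (FundamentalGroup X x₀)) : Prop where
  pathConnected : PathConnectedSpace Y
  locPathConnected : LocPathConnectedSpace Y
  uplp : UPLP x₀ (loopMem x₀ H)
  equiv : ∃ φ : Y ≃ₜ XtildeH x₀ H, ∀ y, endpt x₀ (loopMem x₀ H) (φ y) = p y

/-- The homomorphism induced by `p` on fundamental groups, as a function. -/
noncomputable def pStar {Y : Type u} [TopologicalSpace Y] (p : C(Y, X)) (y₀ : Y) :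
    FundamentalGroup Y y₀ → FundamentalGroup X (p y₀) :=
  fun g => @FundamentalGroup.fromPath X _ (p y₀)
    (Path.Homotopic.Quotient.map (@FundamentalGroup.toPath Y _ y₀ g) p)



section Aux

open CategoryTheory

/-- The hom in the fundamental groupoid determined by a path. -/
def hq {a b : X} (p : Path a b) : FundamentalGroupoid.mk a ⟶ FundamentalGroupoid.mk b := ⟦p⟧

@[simp] lemma hq_trans {a b c : X} (p : Path a b) (q : Path b c) :
    hq (p.trans q) = hq p ≫ hq q := rfl

@[simp] lemma hq_symm {a b : X} (p : Path a b) :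
    hq p.symm = CategoryTheory.inv (hq p) := by
  rw [← Groupoid.inv_eq_inv]; rfl

@[simp] lemma hq_refl (a : X) : hq (Path.refl a) = 𝟙 (FundamentalGroupoid.mk a) := rfl

lemma fl_hq_iff {x : X} {γ₁ γ₂ : Path x x} : fl γ₁ = fl γ₂ ↔ hq γ₁ = hq γ₂ :=
  Iff.rfl

lemma fl_trans {x : X} (γ₁ γ₂ : Path x x) : fl (γ₁.trans γ₂) = fl γ₂ * fl γ₁ :=
  hq_trans γ₁ γ₂

lemma fl_one_of_hq {x : X} {γ : Path x x} (h : hq γ = 𝟙 (FundamentalGroupoid.mk x)) :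
    fl γ = 1 := h

lemma fl_inv_trans {x t : X} (p q : Path x t) :
    fl (q.trans p.symm) = (fl (p.trans q.symm))⁻¹ := by
  apply eq_inv_of_mul_eq_one_left
  rw [← fl_trans]
  exact fl_one_of_hq (by simp)

lemma cast_rfl' {a t : X} (p : Path a t) (h : t = t) : p.cast rfl h = p := by
  ext s
  simp [Path.cast_coe]

variable {x₀ : X} {H : Subgroup (FundamentalGroup X x₀)}

lemma hrel_equiv : Equivalence (HRel x₀ (loopMem x₀ H)) := by
  constructor
  · rintro ⟨t, p⟩
    refine ⟨rfl, ?_⟩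
    show fl _ ∈ H
    rw [cast_rfl', fl_one_of_hq (γ := p.trans p.symm) (by simp)]
    exact one_mem H
  · rintro ⟨t₁, p₁⟩ ⟨t₂, p₂⟩ ⟨e, hp⟩
    obtain rfl : t₁ = t₂ := e
    have hp2 : fl (p₁.trans p₂.symm) ∈ H := hp
    refine ⟨rfl, ?_⟩
    show fl (p₂.trans p₁.symm) ∈ H
    rw [fl_inv_trans p₁ p₂]
    exact inv_mem hp2
  · rintro ⟨t₁, p₁⟩ ⟨t₂, p₂⟩ ⟨t₃, p₃⟩ ⟨e₁, hp₁⟩ ⟨e₂, hp₂⟩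
    obtain rfl : t₁ = t₂ := e₁
    obtain rfl : t₁ = t₃ := e₂
    have hpa : fl (p₁.trans p₂.symm) ∈ H := hp₁
    have hpb : fl (p₂.trans p₃.symm) ∈ H := hp₂
    refine ⟨rfl, ?_⟩
    show fl (p₁.trans p₃.symm) ∈ H
    have key : fl (p₁.trans p₃.symm) =
        fl ((p₁.trans p₂.symm).trans (p₂.trans p₃.symm)) := fl_hq_iff.mpr (by simp)
    rw [key, fl_trans]
    exact mul_mem hpb hpa

lemma mkX_exact {a b : PPath X x₀}
    (h : mkX x₀ (loopMem x₀ H) a = mkX x₀ (loopMem x₀ H) b) :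
    HRel x₀ (loopMem x₀ H) a b :=
  (hrel_equiv).eqvGen_iff.mp (Quot.eq.mp h)

lemma mkX_eq_iff {t : X} (δ₁ δ₂ : Path x₀ t) :
    mkX x₀ (loopMem x₀ H) ⟨t, δ₁⟩ = mkX x₀ (loopMem x₀ H) ⟨t, δ₂⟩ ↔
      fl (δ₁.trans δ₂.symm) ∈ H := by
  constructor
  · intro h
    obtain ⟨e, hp⟩ := mkX_exact h
    exact hp
  · intro h
    exact Quot.sound ⟨rfl, h⟩

lemma mkX_whisker {t z : X} {δ₁ δ₂ : Path x₀ t}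
    (h : mkX x₀ (loopMem x₀ H) ⟨t, δ₁⟩ = mkX x₀ (loopMem x₀ H) ⟨t, δ₂⟩) (β : Path t z) :
    mkX x₀ (loopMem x₀ H) ⟨z, δ₁.trans β⟩ = mkX x₀ (loopMem x₀ H) ⟨z, δ₂.trans β⟩ := by
  rw [mkX_eq_iff] at h ⊢
  have key : fl ((δ₁.trans β).trans (δ₂.trans β).symm) =
      fl (δ₁.trans δ₂.symm) := fl_hq_iff.mpr (by simp)
  rw [key]
  exact h

lemma endpt_mkX (a : PPath X x₀) :
    endpt x₀ (loopMem x₀ H) (mkX x₀ (loopMem x₀ H) a) = a.target := rfl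

lemma fib_ind {t : X} (q : Fib x₀ (loopMem x₀ H) t) :
    ∃ δ : Path x₀ t, q = mkFib x₀ (loopMem x₀ H) δ := by
  obtain ⟨qv, hqv⟩ := q
  induction qv using Quot.ind with
  | mk a =>
    obtain ⟨s, p⟩ := a
    obtain rfl : s = t := hqv
    exact ⟨p, rfl⟩

lemma whBasic_mono (a : PPath X x₀) {U V : Set X} (h : U ⊆ V) :
    whBasic x₀ (loopMem x₀ H) a U ⊆ whBasic x₀ (loopMem x₀ H) a V := by
  rintro q ⟨z, β, hβ, rfl⟩
  exact ⟨z, β, hβ.trans h, rfl⟩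

lemma whBasic_isOpen {a : PPath X x₀} {U : Set X} (hU : IsOpen U) (ha : a.target ∈ U) :
    IsOpen (whBasic x₀ (loopMem x₀ H) a U) :=
  isOpen_generateFrom_of_mem ⟨a, U, hU, ha, rfl⟩

lemma self_mem_whBasic {t : X} (δ : Path x₀ t) {U : Set X} (h : t ∈ U) :
    mkX x₀ (loopMem x₀ H) ⟨t, δ⟩ ∈ whBasic x₀ (loopMem x₀ H) ⟨t, δ⟩ U := by
  refine ⟨t, Path.refl t, ?_, ?_⟩
  · exact range_subset_iff.mpr fun _ => h
  · exact (mkX_eq_iff _ _).mpr (by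
      rw [fl_one_of_hq (γ := δ.trans ((δ.trans (Path.refl t)).symm)) (by simp)]
      exact one_mem H)

lemma whBasic_subset_of_mem {ε : PPath X x₀} {U : Set X} {t : X} {δ : Path x₀ t}
    (h : mkX x₀ (loopMem x₀ H) ⟨t, δ⟩ ∈ whBasic x₀ (loopMem x₀ H) ε U) :
    whBasic x₀ (loopMem x₀ H) ⟨t, δ⟩ U ⊆ whBasic x₀ (loopMem x₀ H) ε U := by
  obtain ⟨y', β, hβU, heq⟩ := h
  obtain ⟨e, hp⟩ := mkX_exact heq
  obtain rfl : t = y' := e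
  have hpg : fl (δ.trans ((ε.path.trans β).symm)) ∈ H := hp
  rintro q ⟨z, β', hβ'U, rfl⟩
  refine ⟨z, β.trans β', ?_, ?_⟩
  · rw [Path.trans_range]
    exact union_subset hβU hβ'U
  · refine ((mkX_eq_iff _ _).mpr ?_)
    have key : fl ((δ.trans β').trans ((ε.path.trans (β.trans β')).symm)) =
        fl (δ.trans ((ε.path.trans β).symm)) := fl_hq_iff.mpr (by simp)
    rw [key]
    exact hpg

lemma target_mem_of_mem_whBasic {ε : PPath X x₀} {U : Set X} {t : X} {δ : Path x₀ t}
    (h : mkX x₀ (loopMem x₀ H) ⟨t, δ⟩ ∈ whBasic x₀ (loopMem x₀ H) ε U) : t ∈ U := by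
  obtain ⟨y', β, hβU, heq⟩ := h
  obtain ⟨e, -⟩ := mkX_exact heq
  obtain rfl : t = y' := e
  have := hβU (Set.mem_range_self 1)
  rwa [β.target] at this

lemma exists_basic_nhd {t : X} (δ : Path x₀ t) {O : Set (Xtilde x₀ (loopMem x₀ H))}
    (hO : IsOpen O) (hmem : mkX x₀ (loopMem x₀ H) ⟨t, δ⟩ ∈ O) :
    ∃ V : Set X, IsOpen V ∧ t ∈ V ∧ whBasic x₀ (loopMem x₀ H) ⟨t, δ⟩ V ⊆ O := by
  have hO' : GenerateOpen
      { S | ∃ (α : PPath X x₀) (U : Set X), IsOpen U ∧ α.target ∈ U ∧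
          S = whBasic x₀ (loopMem x₀ H) α U } O := hO
  clear hO
  revert hmem
  induction hO' with
  | basic S hS =>
    intro hmem
    obtain ⟨a, U, hU, haU, rfl⟩ := hS
    exact ⟨U, hU, target_mem_of_mem_whBasic hmem, whBasic_subset_of_mem hmem⟩
  | univ => exact fun _ => ⟨univ, isOpen_univ, mem_univ t, subset_univ _⟩
  | inter S₁ S₂ h₁ h₂ ih₁ ih₂ =>
    intro hmem
    obtain ⟨V₁, hV₁, htV₁, hs₁⟩ := ih₁ hmem.1
    obtain ⟨V₂, hV₂, htV₂, hs₂⟩ := ih₂ hmem.2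
    exact ⟨V₁ ∩ V₂, hV₁.inter hV₂, ⟨htV₁, htV₂⟩,
      subset_inter ((whBasic_mono _ inter_subset_left).trans hs₁)
        ((whBasic_mono _ inter_subset_right).trans hs₂)⟩
  | sUnion S hS ih =>
    intro hmem
    obtain ⟨s, hsS, hmem'⟩ := hmem
    obtain ⟨V, hV, htV, hsub⟩ := ih s hsS hmem'
    exact ⟨V, hV, htV, hsub.trans (subset_sUnion_of_mem hsS)⟩

end Aux

/-- Let `H` be a subgroup of `π₁(X, x₀)`. Then `X` is an `H`-SLT space if
and only if for every path `α` in `X` from `x` to `y`, the map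
`f^α_H : (p_H⁻¹(y))^wh → (p_H⁻¹(x))^wh`, `[δ]_H ↦ [δ⋆α⁻¹]_H`, is continuous. -/
theorem statement8 {X : Type u} [TopologicalSpace X] [PathConnectedSpace X] (x₀ : X)
    (H : Subgroup (FundamentalGroup X x₀)) :
    IsHSLTSpace x₀ H ↔
      ∀ (x y : X) (α : Path x y)
        (f : Fib x₀ (loopMem x₀ H) y → Fib x₀ (loopMem x₀ H) x),
        (∀ δ : Path x₀ y,
          f (mkFib x₀ (loopMem x₀ H) δ) = mkFib x₀ (loopMem x₀ H) (δ.trans α.symm)) →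
        Continuous f := by
  constructor
  · intro hS x y α f hf
    have key : Continuous fun q : Fib x₀ (loopMem x₀ H) y =>
        ((f q : Fib x₀ (loopMem x₀ H) x) : Xtilde x₀ (loopMem x₀ H)) := by
      apply continuous_generateFrom_iff.mpr
      rintro S ⟨ε, U, hU, hεU, rfl⟩
      rw [isOpen_iff_forall_mem_open]
      rintro q hq0
      obtain ⟨δ, rfl⟩ := fib_ind q
      have hfδ : ((f (mkFib x₀ (loopMem x₀ H) δ)) : Xtilde x₀ (loopMem x₀ H)) =
          mkX x₀ (loopMem x₀ H) ⟨x, δ.trans α.symm⟩ := by rw [hf δ]; rfl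
      rw [mem_preimage, hfδ] at hq0
      have hxU : x ∈ U := target_mem_of_mem_whBasic hq0
      obtain ⟨V, hV, hyV, hslt⟩ := hS x y α (δ.trans α.symm) U hU hxU
      refine ⟨Subtype.val ⁻¹' whBasic x₀ (loopMem x₀ H) ⟨y, δ⟩ V, ?_, ?_, ?_⟩
      · rintro q' hq'
        rw [mem_preimage] at hq'
        obtain ⟨z, η, hηV, hval⟩ := hq'
        have hz : z = y := by
          have h4 := q'.2
          rw [hval] at h4
          exact h4
        subst hz
        have hq'eq : q' = mkFib x₀ (loopMem x₀ H) (δ.trans η) := Subtype.ext hval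
        rw [mem_preimage, hq'eq]
        have h5 : ((f (mkFib x₀ (loopMem x₀ H) (δ.trans η))) : Xtilde x₀ (loopMem x₀ H)) =
            mkX x₀ (loopMem x₀ H) ⟨x, (δ.trans η).trans α.symm⟩ := by rw [hf]; rfl
        rw [h5]
        obtain ⟨γ, hγU, hγH⟩ := hslt η hηV
        apply whBasic_subset_of_mem hq0
        refine ⟨x, γ, hγU, ?_⟩
        refine (mkX_eq_iff _ _).mpr ?_
        have key2 : fl (((δ.trans η).trans α.symm).trans
              (((δ.trans α.symm).trans γ).symm)) =
            fl ((δ.trans α.symm).trans ((((α.trans (η.trans α.symm)).trans γ.symm)).trans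
              (δ.trans α.symm).symm)) :=
          fl_hq_iff.mpr (by simp)
        rw [key2]
        exact hγH
      · exact (whBasic_isOpen hV hyV).preimage continuous_subtype_val
      · exact self_mem_whBasic δ hyV
    exact key.subtype_mk fun q => (f q).2
  · intro hc x y α lam U hU hxU
    classical
    have hfa : ∀ q : Fib x₀ (loopMem x₀ H) y, ∃ δ : Path x₀ y,
        q = mkFib x₀ (loopMem x₀ H) δ := fun q => fib_ind q
    set f : Fib x₀ (loopMem x₀ H) y → Fib x₀ (loopMem x₀ H) x :=
      fun q => mkFib x₀ (loopMem x₀ H) ((hfa q).choose.trans α.symm) with hfdef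
    have hf : ∀ δ : Path x₀ y,
        f (mkFib x₀ (loopMem x₀ H) δ) = mkFib x₀ (loopMem x₀ H) (δ.trans α.symm) := by
      intro δ
      have h1 := (hfa (mkFib x₀ (loopMem x₀ H) δ)).choose_spec
      have h2 : mkX x₀ (loopMem x₀ H) ⟨y, (hfa (mkFib x₀ (loopMem x₀ H) δ)).choose⟩ =
          mkX x₀ (loopMem x₀ H) ⟨y, δ⟩ := (congrArg Subtype.val h1).symm
      exact Subtype.ext (mkX_whisker h2 α.symm)
    have hcont : Continuous f := hc x y α f hf
    have hO : IsOpen (whBasic x₀ (loopMem x₀ H) ⟨x, lam⟩ U) := whBasic_isOpen hU hxU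
    have hpre : IsOpen (f ⁻¹' (Subtype.val ⁻¹' whBasic x₀ (loopMem x₀ H) ⟨x, lam⟩ U)) :=
      (hO.preimage continuous_subtype_val).preimage hcont
    obtain ⟨O, hOopen, hOeq⟩ := isOpen_induced_iff.mp hpre
    have hmem0 : mkX x₀ (loopMem x₀ H) ⟨y, lam.trans α⟩ ∈ O := by
      have h3 : mkFib x₀ (loopMem x₀ H) (lam.trans α) ∈
          f ⁻¹' (Subtype.val ⁻¹' whBasic x₀ (loopMem x₀ H) ⟨x, lam⟩ U) := by
        rw [mem_preimage, mem_preimage, hf]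
        refine ⟨x, Path.refl x, range_subset_iff.mpr fun _ => hxU, ?_⟩
        refine (mkX_eq_iff _ _).mpr ?_
        rw [fl_one_of_hq (γ := ((lam.trans α).trans α.symm).trans
          ((lam.trans (Path.refl x)).symm)) (by simp)]
        exact one_mem H
      rw [← hOeq, mem_preimage] at h3
      exact h3
    obtain ⟨V, hVopen, hyV, hVsub⟩ := exists_basic_nhd (lam.trans α) hOopen hmem0
    refine ⟨V, hVopen, hyV, ?_⟩
    intro β hβV
    have h1 : mkX x₀ (loopMem x₀ H) ⟨y, (lam.trans α).trans β⟩ ∈ O :=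
      hVsub ⟨y, β, hβV, rfl⟩
    have h2 : mkFib x₀ (loopMem x₀ H) ((lam.trans α).trans β) ∈
        f ⁻¹' (Subtype.val ⁻¹' whBasic x₀ (loopMem x₀ H) ⟨x, lam⟩ U) := by
      rw [← hOeq, mem_preimage]
      exact h1
    rw [mem_preimage, mem_preimage, hf] at h2
    obtain ⟨z, γ, hγU, heq⟩ := h2
    have heq' : mkX x₀ (loopMem x₀ H) ⟨x, ((lam.trans α).trans β).trans α.symm⟩ =
        mkX x₀ (loopMem x₀ H) ⟨z, lam.trans γ⟩ := heq
    obtain ⟨e, hp⟩ := mkX_exact heq'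
    obtain rfl : x = z := e
    have hpg : fl ((((lam.trans α).trans β).trans α.symm).trans
        ((lam.trans γ).symm)) ∈ H := hp
    refine ⟨γ, hγU, ?_⟩
    have key : fl (lam.trans ((((α.trans (β.trans α.symm)).trans γ.symm)).trans lam.symm)) =
        fl ((((lam.trans α).trans β).trans α.symm).trans ((lam.trans γ).symm)) :=
      fl_hq_iff.mpr (by simp)
    rw [key]
    exact hpg

end SLTF
end

section
/- If X is a path-connected SLT space and H is a subgroup of π₁(X, x₀), then for any two points x, y ∈ X the fibers (p_H⁻¹(x))^wh and (p_H⁻¹(y))^wh are homeomorphic; in particular, all fibers of an lpc₀-covering map over X are homeomorphic. -/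
open Set TopologicalSpace unitInterval

universe u

namespace SLTF

attribute [local instance] Path.Homotopic.setoid

variable {X : Type u} [TopologicalSpace X]

/- ===== auxiliary machinery for statement9 ===== -/
section Statement9Aux
open CategoryTheory

/-- The homotopy class of a path, as a morphism in the fundamental groupoid. -/
noncomputable def hm {a b : X} (p : Path a b) :
    (⟨a⟩ : FundamentalGroupoid X) ⟶ (⟨b⟩ : FundamentalGroupoid X) := ⟦p⟧

lemma hm_trans {a b c : X} (p : Path a b) (q : Path b c) :
    hm (p.trans q) = hm p ≫ hm q := by
  rfl

lemma hm_symm {a b : X} (p : Path a b) : hm p.symm = Groupoid.inv (hm p) := rfl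

lemma hm_refl (a : X) : hm (Path.refl a) = 𝟙 (⟨a⟩ : FundamentalGroupoid X) := rfl

lemma hm_homotopic {a b : X} {p q : Path a b} (h : p.Homotopic q) : hm p = hm q :=
  Quotient.sound h

lemma fl_hm {x : X} {p q : Path x x} (h : hm p = hm q) : fl p = fl q :=
  congrArg (fun r : Path.Homotopic.Quotient x x =>
    (@FundamentalGroup.fromPath X _ x r)) h

lemma fl_one {x : X} {p : Path x x}
    (h : hm p = 𝟙 (⟨x⟩ : FundamentalGroupoid X)) : fl p = 1 :=
  h

lemma fl_whisker {x₀ z w : X} (p q : Path x₀ z) (d : Path z w) :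
    fl ((p.trans d).trans ((q.trans d).symm)) = fl (p.trans q.symm) := by
  apply fl_hm
  simp [hm_trans, hm_symm, Groupoid.inv_eq_inv]

lemma fl_triv {x₀ z : X} {p q : Path x₀ z} (h : hm p = hm q) :
    fl (p.trans q.symm) = 1 := by
  apply fl_one
  simp [hm_trans, hm_symm, Groupoid.inv_eq_inv, h]

variable (x₀ : X) (H : Subgroup (FundamentalGroup X x₀))

/-- Equal classes in `X̃_H` from a loop witness. -/
lemma mk_eq {z : X} {p q : Path x₀ z} (h : fl (p.trans q.symm) ∈ H) :
    mkX x₀ (loopMem x₀ H) ⟨z, p⟩ = mkX x₀ (loopMem x₀ H) ⟨z, q⟩ :=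
  Quot.sound ⟨rfl, h⟩

lemma mk_eq_of_hm {z : X} {p q : Path x₀ z} (h : hm p = hm q) :
    mkX x₀ (loopMem x₀ H) ⟨z, p⟩ = mkX x₀ (loopMem x₀ H) ⟨z, q⟩ :=
  mk_eq x₀ H (by rw [fl_triv h]; exact H.one_mem)

open Classical in
/-- Concatenation with `δ` on representatives. -/
noncomputable def catP {x y : X} (δ : Path x y) (α : PPath X x₀) : XtildeH x₀ H :=
  if h : α.target = x then mkX x₀ (loopMem x₀ H) ⟨y, (α.path.cast rfl h.symm).trans δ⟩
  else mkX x₀ (loopMem x₀ H) α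

lemma catP_sound {x y : X} (δ : Path x y) (α β : PPath X x₀)
    (r : HRel x₀ (loopMem x₀ H) α β) : catP x₀ H δ α = catP x₀ H δ β := by
  obtain ⟨t, p⟩ := α
  obtain ⟨s, q⟩ := β
  obtain ⟨e, hP⟩ := r
  have e' : t = s := e
  subst e'
  have hP' : fl (p.trans q.symm) ∈ H := hP
  unfold catP
  dsimp only
  by_cases h : t = x
  · subst h
    rw [dif_pos rfl, dif_pos rfl]
    apply mk_eq
    rw [show ((p.cast rfl rfl).trans δ) = p.trans δ from rfl,
      show ((q.cast rfl rfl).trans δ) = q.trans δ from rfl, fl_whisker]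
    exact hP'
  · rw [dif_neg h, dif_neg h]
    exact Quot.sound ⟨rfl, hP⟩

/-- Concatenation with `δ` on `X̃_H`. -/
noncomputable def catX {x y : X} (δ : Path x y) : XtildeH x₀ H → XtildeH x₀ H :=
  Quot.lift (catP x₀ H δ) (catP_sound x₀ H δ)

lemma catX_mk {x y : X} (δ : Path x y) (p : Path x₀ x) :
    catX x₀ H δ (mkX x₀ (loopMem x₀ H) ⟨x, p⟩) = mkX x₀ (loopMem x₀ H) ⟨y, p.trans δ⟩ := by
  show catP x₀ H δ ⟨x, p⟩ = _
  unfold catP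
  rw [dif_pos rfl]
  rfl

lemma endpt_catX {x y : X} (δ : Path x y) (q : XtildeH x₀ H)
    (hq : endpt x₀ (loopMem x₀ H) q = x) : endpt x₀ (loopMem x₀ H) (catX x₀ H δ q) = y := by
  induction q using Quot.ind with
  | _ α =>
    have ht : α.target = x := hq
    show endpt x₀ (loopMem x₀ H) (catP x₀ H δ α) = y
    unfold catP
    rw [dif_pos ht]
    rfl

/-- Concatenation with `δ`, as a map of fibers. -/
noncomputable def catF {x y : X} (δ : Path x y) :
    Fib x₀ (loopMem x₀ H) x → Fib x₀ (loopMem x₀ H) y :=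
  fun q => ⟨catX x₀ H δ q.1, endpt_catX x₀ H δ q.1 q.2⟩

lemma catF_inv {x y : X} (δ : Path x y) (q : Fib x₀ (loopMem x₀ H) x) :
    catF x₀ H δ.symm (catF x₀ H δ q) = q := by
  obtain ⟨q1, hq⟩ := q
  apply Subtype.ext
  show catX x₀ H δ.symm (catX x₀ H δ q1) = q1
  induction q1 using Quot.ind with
  | _ α =>
    obtain ⟨t, p⟩ := α
    have ht : t = x := hq
    subst ht
    show catX x₀ H δ.symm (catX x₀ H δ (mkX x₀ (loopMem x₀ H) ⟨t, p⟩))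
      = mkX x₀ (loopMem x₀ H) ⟨t, p⟩
    rw [catX_mk, catX_mk]
    apply mk_eq_of_hm
    simp [hm_trans, hm_symm, Groupoid.inv_eq_inv]

lemma whBasic_isOpen_s9 {P : Path x₀ x₀ → Prop} (α : PPath X x₀) {U : Set X}
    (hU : IsOpen U) (hmem : α.target ∈ U) : IsOpen (whBasic x₀ P α U) :=
  TopologicalSpace.GenerateOpen.basic _ ⟨α, U, hU, hmem, rfl⟩

lemma subtype_open_of {Y : Type u} [TopologicalSpace Y] {pr : Y → Prop}
    {s : Set {a // pr a}}
    (h : ∀ a ∈ s, ∃ B : Set Y, IsOpen B ∧ ↑a ∈ B ∧ Subtype.val ⁻¹' B ⊆ s) : IsOpen s := by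
  choose B hB hmem hsub using h
  have hs : s = Subtype.val ⁻¹' (⋃ (a : {a // pr a}) (ha : a ∈ s), B a ha) := by
    apply Set.Subset.antisymm
    · intro a ha
      exact Set.mem_preimage.mpr (Set.mem_iUnion₂.mpr ⟨a, ha, hmem a ha⟩)
    · intro a ha
      obtain ⟨b, hb, hab⟩ := Set.mem_iUnion₂.mp (Set.mem_preimage.mp ha)
      exact hsub b hb hab
  rw [hs]
  exact (isOpen_iUnion fun a => isOpen_iUnion fun ha => hB a ha).preimage
    continuous_subtype_val

lemma catF_continuous (hslt : IsSLT X) {x y : X} (δ : Path x y) :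
    Continuous (catF x₀ H δ) := by
  apply Continuous.subtype_mk (f := fun q : Fib x₀ (loopMem x₀ H) x => catX x₀ H δ q.1)
  apply continuous_generateFrom_iff.mpr
  rintro S ⟨a, U, hU, haU, rfl⟩
  apply subtype_open_of
  rintro ⟨q1, hq⟩ hmemS
  induction q1 using Quot.ind with
  | _ α =>
    obtain ⟨t, p⟩ := α
    have ht : t = x := hq
    subst ht
    have hmem2 : catX x₀ H δ (mkX x₀ (loopMem x₀ H) ⟨t, p⟩)
        ∈ whBasic x₀ (loopMem x₀ H) a U := hmemS
    rw [catX_mk] at hmem2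
    obtain ⟨z, β, hβU, heq⟩ := hmem2
    have hz : z = y := by
      have h2 := congrArg (endpt x₀ (loopMem x₀ H)) heq
      exact (h2.symm : _)
    subst hz
    have hyU : z ∈ U := hβU ⟨1, β.target⟩
    obtain ⟨V, hV, hxV, hloop⟩ := hslt z t δ.symm U hU hyU
    refine ⟨whBasic x₀ (loopMem x₀ H) ⟨t, p⟩ V, whBasic_isOpen_s9 x₀ ⟨t, p⟩ hV hxV, ?_, ?_⟩
    · refine ⟨t, Path.refl t, ?_, ?_⟩
      · rintro _ ⟨s, rfl⟩
        simpa using hxV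
      · exact mk_eq_of_hm x₀ H (by simp [hm_trans, hm_refl])
    · rintro ⟨q1', hq'⟩ hmemB
      obtain ⟨z', β', hβ'V, heq'⟩ := hmemB
      have heq'' : q1' = mkX x₀ (loopMem x₀ H) ⟨z', p.trans β'⟩ := heq'
      have hz' : z' = t := by
        rw [heq''] at hq'
        exact hq'
      subst hz'
      obtain ⟨γ, hγU, hhom⟩ := hloop β' hβ'V
      show catX x₀ H δ q1' ∈ whBasic x₀ (loopMem x₀ H) a U
      refine ⟨z, β.trans γ, ?_, ?_⟩
      · rw [Path.trans_range]
        exact Set.union_subset hβU hγU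
      · rw [heq'', catX_mk]
        have E1 : mkX x₀ (loopMem x₀ H) ⟨z, (p.trans β').trans δ⟩
            = mkX x₀ (loopMem x₀ H) ⟨z, (p.trans δ).trans γ⟩ := by
          apply mk_eq_of_hm
          have hγ : hm γ = hm (δ.symm.trans (β'.trans δ.symm.symm)) :=
            (hm_homotopic hhom).symm
          simp [hm_trans, hm_symm, Groupoid.inv_eq_inv, hγ]
        have E2 : mkX x₀ (loopMem x₀ H) ⟨z, (p.trans δ).trans γ⟩
            = mkX x₀ (loopMem x₀ H) ⟨z, (a.path.trans β).trans γ⟩ := by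
          have h3 := congrArg (catX x₀ H γ) heq
          rwa [catX_mk, catX_mk] at h3
        have E3 : mkX x₀ (loopMem x₀ H) ⟨z, (a.path.trans β).trans γ⟩
            = mkX x₀ (loopMem x₀ H) ⟨z, a.path.trans (β.trans γ)⟩ := by
          apply mk_eq_of_hm
          simp [hm_trans]
        rw [E1, E2, E3]

end Statement9Aux

/-- If `X` is a path-connected SLT space and `H` is a subgroup of
`π₁(X, x₀)`, then for any two points `x, y ∈ X` the fibers `(p_H⁻¹(x))^wh` and
`(p_H⁻¹(y))^wh` are homeomorphic; in particular, all fibers of an `lpc₀`-covering map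
over `X` are homeomorphic. -/
theorem statement9 {X : Type u} [TopologicalSpace X] [PathConnectedSpace X] (x₀ : X)
    (hslt : IsSLT X) (H : Subgroup (FundamentalGroup X x₀)) (x y : X) :
    Nonempty (Fib x₀ (loopMem x₀ H) x ≃ₜ Fib x₀ (loopMem x₀ H) y) := by
  obtain ⟨δ⟩ := PathConnectedSpace.joined x y
  have hinv1 : ∀ q, catF x₀ H δ.symm (catF x₀ H δ q) = q := catF_inv x₀ H δ
  have hinv2 : ∀ q, catF x₀ H δ (catF x₀ H δ.symm q) = q := by
    intro q
    have := catF_inv x₀ H δ.symm q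
    rwa [Path.symm_symm] at this
  exact ⟨⟨⟨catF x₀ H δ, catF x₀ H δ.symm, hinv1, hinv2⟩,
    catF_continuous x₀ H hslt δ, catF_continuous x₀ H hslt δ.symm⟩⟩

end SLTF
end

section
/- Let p : X̂ → X be a semicovering map, x̂₀ ∈ p⁻¹(x₀), H a subgroup of π₁(X, x₀), and Ĥ the subgroup of π₁(X̂, x̂₀) with p_*Ĥ = H. If α is an H-SLT path in X from x₀ to x, then the lift α̂ of α starting at x̂₀ is an Ĥ-SLT path in X̂. -/
open Set TopologicalSpace unitInterval

universe u

namespace SLTF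

attribute [local instance] Path.Homotopic.setoid

variable {X : Type u} [TopologicalSpace X]

section Aux

variable {X Y : Type u} [TopologicalSpace X] [TopologicalSpace Y]

lemma fl_inj {x : X} {a b : Path x x} (h : fl a = fl b) :
    (⟦a⟧ : Path.Homotopic.Quotient x x) = ⟦b⟧ :=
  h

lemma pStar_fl (p : C(Y, X)) {y₀ : Y} (δ : Path y₀ y₀) :
    pStar p y₀ (fl δ) = fl (δ.map p.continuous) := by
  rfl

lemma lift_unique (p : C(Y, X)) (hsc : IsSemicovering ⇑p)
    (c₁ c₂ : C(I, Y)) (h0 : c₁ 0 = c₂ 0) (hp : ∀ t, p (c₁ t) = p (c₂ t)) : c₁ = c₂ := by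
  obtain ⟨g, -, hu⟩ := hsc.pathLift (c₁ 0) (p.comp c₁) rfl
  have h1 := hu c₁ ⟨rfl, fun t => rfl⟩
  have h2 := hu c₂ ⟨h0.symm, fun t => (hp t).symm⟩
  rw [h1, h2]

lemma homotopic_of_map_homotopic (p : C(Y, X)) (hsc : IsSemicovering ⇑p)
    {y₀ : Y} (δ₁ δ₂ : Path y₀ y₀)
    (h : (δ₁.map p.continuous).Homotopic (δ₂.map p.continuous)) : δ₁.Homotopic δ₂ := by
  obtain ⟨F⟩ := h
  have h00 : F.toContinuousMap (0, 0) = p y₀ := by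
    have := F.apply_zero (0 : I)
    simpa using this
  obtain ⟨Φ, ⟨hΦ0, hΦp⟩, -⟩ := hsc.homotopyLift y₀ F.toContinuousMap h00
  have key : ∀ (c₁ c₂ : I → Y), Continuous c₁ → Continuous c₂ →
      c₁ 0 = c₂ 0 → (∀ t, p (c₁ t) = p (c₂ t)) → ∀ t, c₁ t = c₂ t := by
    intro c₁ c₂ hc₁ hc₂ h0 hp t
    have := lift_unique p hsc ⟨c₁, hc₁⟩ ⟨c₂, hc₂⟩ h0 hp
    exact congrFun (congrArg DFunLike.coe this) t
  have hF0 : ∀ s : I, F (s, 0) = p y₀ := fun s => by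
    have := F.eq_fst s (show (0 : I) ∈ ({0, 1} : Set I) from Or.inl rfl)
    simpa using this
  have hF1 : ∀ s : I, F (s, 1) = p y₀ := fun s => by
    have := F.eq_fst s (show (1 : I) ∈ ({0, 1} : Set I) from Or.inr rfl)
    simpa using this
  have hΦp' : ∀ z, p (Φ z) = F z := hΦp
  have hs0 : ∀ s : I, Φ (s, 0) = y₀ := by
    intro s
    refine key (fun s => Φ (s, 0)) (fun _ => y₀)
      (Φ.continuous.comp (by fun_prop)) continuous_const hΦ0 (fun s => ?_) s
    rw [hΦp' (s, 0), hF0 s]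
  have h0t : ∀ t : I, Φ (0, t) = δ₁ t := by
    intro t
    refine key (fun t => Φ (0, t)) δ₁ (Φ.continuous.comp (by fun_prop))
      δ₁.continuous (show Φ (0, 0) = δ₁ 0 by rw [hΦ0]; exact δ₁.source.symm) (fun t => ?_) t
    rw [hΦp' (0, t), F.apply_zero]
    simp
  have h1t : ∀ t : I, Φ (1, t) = δ₂ t := by
    intro t
    refine key (fun t => Φ (1, t)) δ₂ (Φ.continuous.comp (by fun_prop))
      δ₂.continuous (show Φ (1, 0) = δ₂ 0 by rw [hs0 1]; exact δ₂.source.symm) (fun t => ?_) t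
    rw [hΦp' (1, t), F.apply_one]
    simp
  have hs1 : ∀ s : I, Φ (s, 1) = y₀ := by
    intro s
    refine key (fun s => Φ (s, 1)) (fun _ => y₀)
      (Φ.continuous.comp (by fun_prop)) continuous_const
      (show Φ (0, 1) = y₀ by rw [h0t 1]; exact δ₁.target) (fun s => ?_) s
    rw [hΦp' (s, 1), hF1 s]
  refine ⟨⟨{ toContinuousMap := Φ,
             map_zero_left := fun t => by simpa using h0t t,
             map_one_left := fun t => by simpa using h1t t },
           fun s => ?_⟩⟩
  intro t ht
  rcases ht with rfl | ht
  · simpa using (hs0 s).trans δ₁.source.symm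
  · rw [Set.mem_singleton_iff] at ht
    subst ht
    simpa using (hs1 s).trans δ₁.target.symm

lemma pStar_injective (p : C(Y, X)) (hsc : IsSemicovering ⇑p) (y₀ : Y) :
    Function.Injective (pStar p y₀) := by
  intro g₁ g₂ h
  set a := @FundamentalGroup.toPath Y _ y₀ g₁ with ha
  set b := @FundamentalGroup.toPath Y _ y₀ g₂ with hb
  obtain ⟨δ₁, hδ₁⟩ := Quotient.exists_rep a
  obtain ⟨δ₂, hδ₂⟩ := Quotient.exists_rep b
  have hg₁ : g₁ = fl δ₁ := hδ₁.symm
  have hg₂ : g₂ = fl δ₂ := hδ₂.symm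
  rw [hg₁, hg₂] at h ⊢
  rw [pStar_fl, pStar_fl] at h
  have h2 : δ₁.Homotopic δ₂ := homotopic_of_map_homotopic p hsc δ₁ δ₂ (Quotient.exact (fl_inj h))
  exact congrArg (fun q => @FundamentalGroup.fromPath Y _ y₀ q) (Quotient.sound h2)

end Aux

/-- Let `p : X̂ → X` be a semicovering map, `x̂₀` a point of `X̂`
(with base point `x₀ = p x̂₀`), `H` a subgroup of `π₁(X, x₀)`, and `Ĥ` the subgroup of
`π₁(X̂, x̂₀)` with `p₊Ĥ = H`. If `α` is an `H`-SLT path in `X` from `x₀` to `x`, then the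
lift `α̂` of `α` starting at `x̂₀` is an `Ĥ`-SLT path in `X̂`. -/
theorem statement10 {X Y : Type u} [TopologicalSpace X] [TopologicalSpace Y]
    (p : C(Y, X)) (hsc : IsSemicovering ⇑p) (xh₀ yh : Y)
    (Hh : Subgroup (FundamentalGroup Y xh₀))
    (H : Subgroup (FundamentalGroup X (p xh₀)))
    (hH : pStar p xh₀ '' (Hh : Set (FundamentalGroup Y xh₀)) =
      (H : Set (FundamentalGroup X (p xh₀))))
    (α : Path (p xh₀) (p yh)) (hα : IsHSLTPath (p xh₀) H α)
    (αh : Path xh₀ yh) (hlift : ∀ t, p (αh t) = α t) :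
    IsHSLTPath xh₀ Hh αh := by
  intro lam U hU hxU
  obtain ⟨e, hxe, hpe⟩ := hsc.localHomeo xh₀
  set W := U ∩ e.source with hW
  have hWo : IsOpen W := hU.inter e.open_source
  have hxW : xh₀ ∈ W := ⟨hxU, hxe⟩
  have hU'o : IsOpen (⇑e '' W) := e.isOpen_image_of_subset_source hWo inter_subset_right
  have hx0U' : p xh₀ ∈ ⇑e '' W := ⟨xh₀, hxW, by rw [← hpe]⟩
  obtain ⟨V', hV'o, hyV', hV'⟩ := hα (lam.map p.continuous) (⇑e '' W) hU'o hx0U'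
  refine ⟨⇑p ⁻¹' V', hV'o.preimage p.continuous, hyV', ?_⟩
  intro β hβ
  have hβ' : range ⇑(β.map p.continuous) ⊆ V' := by
    rw [Path.map_coe, Set.range_comp]
    exact (Set.image_subset_iff).2 hβ
  obtain ⟨γ', hγ'U, hγ'H⟩ := hV' (β.map p.continuous) hβ'
  have hγ'rt : ∀ t, γ' t ∈ ⇑e '' W := fun t => hγ'U ⟨t, rfl⟩
  have hsub : ⇑e '' W ⊆ e.target := by
    rintro _ ⟨w, hw, rfl⟩; exact e.map_source hw.2
  have hcont : Continuous fun t => e.symm (γ' t) :=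
    e.continuousOn_symm.comp_continuous γ'.continuous (fun t => hsub (hγ'rt t))
  have hback : ∀ t, e.symm (γ' t) ∈ W := by
    intro t
    obtain ⟨w, hw, hwe⟩ := hγ'rt t
    rw [← hwe, e.left_inv hw.2]
    exact hw
  have hsymm0 : e.symm (γ' 0) = xh₀ := by
    have h1 : γ' 0 = p xh₀ := γ'.source
    rw [h1, hpe, e.left_inv hxe]
  have hsymm1 : e.symm (γ' 1) = xh₀ := by
    have h1 : γ' 1 = p xh₀ := γ'.target
    rw [h1, hpe, e.left_inv hxe]
  set γ : Path xh₀ xh₀ := ⟨⟨fun t => e.symm (γ' t), hcont⟩, hsymm0, hsymm1⟩ with hγdef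
  have hpγ : ∀ t, p (γ t) = γ' t := fun t => by
    show p (e.symm (γ' t)) = γ' t
    exact (congrFun hpe (e.symm (γ' t))).trans (e.right_inv (hsub (hγ'rt t)))
  refine ⟨γ, ?_, ?_⟩
  · rintro _ ⟨t, rfl⟩
    exact (hback t).1
  · have hαm : αh.map p.continuous = α := by
      ext t
      simpa using hlift t
    have hγm : γ.map p.continuous = γ' := by
      ext t
      exact hpγ t
    have hmap : (lam.trans ((((αh.trans (β.trans αh.symm)).trans γ.symm)).trans lam.symm)).map
        p.continuous
        = (lam.map p.continuous).trans ((((α.trans ((β.map p.continuous).trans α.symm)).trans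
            γ'.symm)).trans (lam.map p.continuous).symm) := by
      simp only [Path.map_trans, ← Path.map_symm, hαm, hγm]
    have hmem : pStar p xh₀
        (fl (lam.trans ((((αh.trans (β.trans αh.symm)).trans γ.symm)).trans lam.symm)))
        ∈ (H : Set (FundamentalGroup X (p xh₀))) := by
      rw [pStar_fl, hmap]
      exact hγ'H
    rw [← hH] at hmem
    obtain ⟨g, hgHh, hg⟩ := hmem
    have hEq := pStar_injective p hsc xh₀ hg
    rw [← hEq]
    exact hgHh

end SLTF
end

section
/- Let X be locally path connected and let H be an open subgroup of π₁^qtop(X, x₀). Then X is an H-SLT space. -/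
open Set TopologicalSpace unitInterval

universe u

namespace SLTF

attribute [local instance] Path.Homotopic.setoid

variable {X : Type u} [TopologicalSpace X]

lemma const_ball {Y : Type u} [TopologicalSpace Y] {y : Y} {S : Set C(I, Y)}
    (hS : IsOpen S) (hy : (ContinuousMap.const I y) ∈ S) :
    ∃ V : Set Y, IsOpen V ∧ y ∈ V ∧ ∀ f : C(I, Y), range ⇑f ⊆ V → f ∈ S := by
  have hgen : TopologicalSpace.GenerateOpen
      (image2 (fun K U ↦ {f : C(I,Y) | MapsTo f K U}) {K | IsCompact K} {U | IsOpen U}) S := hS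
  clear hS
  induction hgen with
  | basic s hs =>
    obtain ⟨K, hK, U, hU, rfl⟩ := hs
    rcases K.eq_empty_or_nonempty with rfl | ⟨t, ht⟩
    · exact ⟨univ, isOpen_univ, trivial, fun f _ => mapsTo_empty _ _⟩
    · refine ⟨U, hU, hy ht, fun f hf _ _ => hf ⟨_, rfl⟩⟩
  | univ => exact ⟨univ, isOpen_univ, trivial, fun _ _ => trivial⟩
  | inter s t _ _ ihs iht =>
    obtain ⟨V1, hV1, hyV1, h1⟩ := ihs hy.1
    obtain ⟨V2, hV2, hyV2, h2⟩ := iht hy.2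
    exact ⟨V1 ∩ V2, hV1.inter hV2, ⟨hyV1, hyV2⟩,
      fun f hf => ⟨h1 f (hf.trans inter_subset_left), h2 f (hf.trans inter_subset_right)⟩⟩
  | sUnion SS _ ih =>
    obtain ⟨s, hs, hys⟩ := hy
    obtain ⟨V, hV, hyV, h⟩ := ih s hs hys
    exact ⟨V, hV, hyV, fun f hf => ⟨s, hs, h f hf⟩⟩

lemma loop_ball {x : X} {S : Set (Path x x)} (hS : IsOpen S) (hx : Path.refl x ∈ S) :
    ∃ V : Set X, IsOpen V ∧ x ∈ V ∧ ∀ β : Path x x, range ⇑β ⊆ V → β ∈ S := by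
  obtain ⟨T, hT, rfl⟩ := isOpen_induced_iff.mp hS
  have hconst : ContinuousMap.const I x ∈ T := by
    have h : ((Path.refl x : Path x x) : C(I, X)) = ContinuousMap.const I x := by
      ext t; rfl
    rw [← h]; exact hx
  obtain ⟨V, hV, hxV, h⟩ := const_ball hT hconst
  exact ⟨V, hV, hxV, fun β hβ => h (β : C(I, X)) (by simpa using hβ)⟩

lemma fl_eq_one {x : X} {γ : Path x x} (h : γ.Homotopic (Path.refl x)) : fl γ = 1 := by
  have h2 : (⟦γ⟧ : Path.Homotopic.Quotient x x) = ⟦Path.refl x⟧ := Quotient.sound h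
  show (⟦γ⟧ : FundamentalGroupoid.mk x ⟶ FundamentalGroupoid.mk x) = _
  rw [h2]
  rfl

open CategoryTheory in
lemma null_aux {x₀ x y : X} (lam : Path x₀ x) (α : Path x y) :
    (lam.trans (((α.trans ((Path.refl y).trans α.symm)).trans
      (Path.refl x).symm).trans lam.symm)).Homotopic (Path.refl x₀) := by
  have key : (⟦lam.trans (((α.trans ((Path.refl y).trans α.symm)).trans
        (Path.refl x).symm).trans lam.symm)⟧ :
        FundamentalGroupoid.mk x₀ ⟶ FundamentalGroupoid.mk x₀) =
      (⟦lam⟧ : FundamentalGroupoid.mk x₀ ⟶ FundamentalGroupoid.mk x)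
        ≫ (((⟦α⟧ : FundamentalGroupoid.mk x ⟶ FundamentalGroupoid.mk y)
          ≫ (𝟙 (FundamentalGroupoid.mk y) ≫ CategoryTheory.Groupoid.inv ⟦α⟧))
          ≫ CategoryTheory.Groupoid.inv (𝟙 (FundamentalGroupoid.mk x)))
        ≫ CategoryTheory.Groupoid.inv ⟦lam⟧ := rfl
  have key2 : (⟦lam.trans (((α.trans ((Path.refl y).trans α.symm)).trans
        (Path.refl x).symm).trans lam.symm)⟧ :
        FundamentalGroupoid.mk x₀ ⟶ FundamentalGroupoid.mk x₀) =
      𝟙 (FundamentalGroupoid.mk x₀) := by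
    rw [key]
    simp [CategoryTheory.Groupoid.inv_eq_inv]
    rfl
  exact Quotient.exact key2

/-- Let `X` be locally path connected and let `H` be an open subgroup of
`π₁^qtop(X, x₀)`. Then `X` is an `H`-SLT space. -/
theorem statement15 {X : Type u} [TopologicalSpace X] [PathConnectedSpace X]
    [LocallyPathConnectedSpace X] (x₀ : X)
    (H : Subgroup (FundamentalGroup X x₀))
    (hopen : @IsOpen _ (qtopPi1 x₀) (H : Set (FundamentalGroup X x₀))) :
    IsHSLTSpace x₀ H := by
  intro x y α lam U hU hxU
  have hopen' : IsOpen ((fun γ : Path x₀ x₀ => fl γ) ⁻¹' (H : Set (FundamentalGroup X x₀))) :=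
    hopen
  set Φ : Path y y → Path x₀ x₀ := fun β =>
    lam.trans (((α.trans (β.trans α.symm)).trans (Path.refl x).symm).trans lam.symm) with hΦ
  have hc1 : Continuous fun β : Path y y => β.trans α.symm :=
    Path.continuous_trans.comp (continuous_id.prodMk continuous_const)
  have hc2 : Continuous fun β : Path y y => α.trans (β.trans α.symm) :=
    Path.continuous_trans.comp (continuous_const.prodMk hc1)
  have hc3 : Continuous fun β : Path y y =>
      (α.trans (β.trans α.symm)).trans (Path.refl x).symm :=
    Path.continuous_trans.comp (hc2.prodMk continuous_const)
  have hc4 : Continuous fun β : Path y y =>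
      ((α.trans (β.trans α.symm)).trans (Path.refl x).symm).trans lam.symm :=
    Path.continuous_trans.comp (hc3.prodMk continuous_const)
  have hΦc : Continuous Φ :=
    Path.continuous_trans.comp (continuous_const.prodMk hc4)
  have hS : IsOpen (Φ ⁻¹' ((fun γ : Path x₀ x₀ => fl γ) ⁻¹' (H : Set _))) :=
    hopen'.preimage hΦc
  have hnull := null_aux lam α
  have hrefl : Path.refl y ∈ Φ ⁻¹' ((fun γ : Path x₀ x₀ => fl γ) ⁻¹' (H : Set _)) := by
    show fl (Φ (Path.refl y)) ∈ H
    rw [fl_eq_one hnull]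
    exact H.one_mem
  obtain ⟨V, hV, hyV, hball⟩ := loop_ball hS hrefl
  refine ⟨V, hV, hyV, fun β hβ => ⟨Path.refl x, ?_, hball β hβ⟩⟩
  rw [Path.refl_range]
  exact singleton_subset_iff.mpr hxU

end SLTF
end
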